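/- Network-level invariant for the toy protocol: for every net_tree n with disjoint node addresses (wf_net_tree n), the closed network closed (pnet (λi. ptoy i ⟨⟨ qmsg) n) satisfies the invariant netglobal (λσ. ∀ i, no (σ i) ≤ no (σ (nhip (σ i)))): in every reachable network state, the value of no at each node is never greater than the value of no at the node named by its nhip field. -/

import Mathlib

namespace AWN

/-- AWN sequential process terms. -/
inductive Seqp (S PN L IP MSG DATA : Type) : Type where
  | assign  (l : L) (u : S → S) (p : Seqp S PN L IP MSG DATA)
  | guard   (l : L) (g : S → Set S) (p : Seqp S PN L IP MSG DATA)
  | ucast   (l : L) (fip : S → IP) (fmsg : S → MSG) (p q : Seqp S PN L IP MSG DATA)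
  | bcast   (l : L) (fmsg : S → MSG) (p : Seqp S PN L IP MSG DATA)
  | gcast   (l : L) (fips : S → Set IP) (fmsg : S → MSG) (p : Seqp S PN L IP MSG DATA)
  | send    (l : L) (fmsg : S → MSG) (p : Seqp S PN L IP MSG DATA)
  | deliver (l : L) (fdata : S → DATA) (p : Seqp S PN L IP MSG DATA)
  | receive (l : L) (u : MSG → S → S) (p : Seqp S PN L IP MSG DATA)
  | choice  (p q : Seqp S PN L IP MSG DATA)
  | call    (pn : PN)

variable {S PN L IP MSG DATA : Type}

def Seqp.isChoice : Seqp S PN L IP MSG DATA → Prop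
  | .choice _ _ => True
  | _ => False

def Seqp.isCall : Seqp S PN L IP MSG DATA → Prop
  | .call _ => True
  | _ => False

/-- The microstep relation `p ↝Γ q`. -/
inductive Microstep (Γ : PN → Seqp S PN L IP MSG DATA) :
    Seqp S PN L IP MSG DATA → Seqp S PN L IP MSG DATA → Prop where
  | choice_left  {p q : Seqp S PN L IP MSG DATA} : Microstep Γ (.choice p q) p
  | choice_right {p q : Seqp S PN L IP MSG DATA} : Microstep Γ (.choice p q) q
  | call {pn : PN} : Microstep Γ (.call pn) (Γ pn)

/-- A specification is wellformed iff the converse of its microstep relation is wellfounded. -/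
def Wellformed (Γ : PN → Seqp S PN L IP MSG DATA) : Prop :=
  WellFounded (fun p q => Microstep Γ q p)

/-- `Sterm Γ p q` holds iff `q ∈ sterms Γ p`: `sterms` unfolds choice and call
and is the singleton `{p}` on prefix terms. -/
inductive Sterm (Γ : PN → Seqp S PN L IP MSG DATA) :
    Seqp S PN L IP MSG DATA → Seqp S PN L IP MSG DATA → Prop where
  | prefix {p : Seqp S PN L IP MSG DATA} : ¬ p.isChoice → ¬ p.isCall → Sterm Γ p p
  | choice_left  {p q r : Seqp S PN L IP MSG DATA} : Sterm Γ p r → Sterm Γ (.choice p q) r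
  | choice_right {p q r : Seqp S PN L IP MSG DATA} : Sterm Γ q r → Sterm Γ (.choice p q) r
  | call {pn : PN} {r : Seqp S PN L IP MSG DATA} : Sterm Γ (Γ pn) r → Sterm Γ (.call pn) r

/-- `sterms Γ p` as a set. -/
def sterms (Γ : PN → Seqp S PN L IP MSG DATA) (p : Seqp S PN L IP MSG DATA) :
    Set (Seqp S PN L IP MSG DATA) :=
  {q | Sterm Γ p q}

/-- Local start terms. -/
def stermsl : Seqp S PN L IP MSG DATA → Set (Seqp S PN L IP MSG DATA)
  | .choice p q => stermsl p ∪ stermsl q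
  | p => {p}

/-- Local control terms. -/
def ctermsl : Seqp S PN L IP MSG DATA → Set (Seqp S PN L IP MSG DATA)
  | .assign l u p => insert (.assign l u p) (ctermsl p)
  | .guard l g p => insert (.guard l g p) (ctermsl p)
  | .ucast l fip fmsg p q => insert (.ucast l fip fmsg p q) (ctermsl p ∪ ctermsl q)
  | .bcast l fmsg p => insert (.bcast l fmsg p) (ctermsl p)
  | .gcast l fips fmsg p => insert (.gcast l fips fmsg p) (ctermsl p)
  | .send l fmsg p => insert (.send l fmsg p) (ctermsl p)
  | .deliver l fdata p => insert (.deliver l fdata p) (ctermsl p)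
  | .receive l u p => insert (.receive l u p) (ctermsl p)
  | .choice p q => ctermsl p ∪ ctermsl q
  | .call pn => {.call pn}

/-- `Dterm Γ p q` holds iff `q ∈ dterms Γ p`, the derivative terms of `p`. -/
inductive Dterm (Γ : PN → Seqp S PN L IP MSG DATA) :
    Seqp S PN L IP MSG DATA → Seqp S PN L IP MSG DATA → Prop where
  | choice_left  {p q r : Seqp S PN L IP MSG DATA} : Dterm Γ p r → Dterm Γ (.choice p q) r
  | choice_right {p q r : Seqp S PN L IP MSG DATA} : Dterm Γ q r → Dterm Γ (.choice p q) r
  | call {pn : PN} {r : Seqp S PN L IP MSG DATA} : Dterm Γ (Γ pn) r → Dterm Γ (.call pn) r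
  | assign {l : L} {u : S → S} {p r : Seqp S PN L IP MSG DATA} :
      Sterm Γ p r → Dterm Γ (.assign l u p) r
  | guard {l : L} {g : S → Set S} {p r : Seqp S PN L IP MSG DATA} :
      Sterm Γ p r → Dterm Γ (.guard l g p) r
  | ucast_left {l : L} {fip : S → IP} {fmsg : S → MSG} {p q r : Seqp S PN L IP MSG DATA} :
      Sterm Γ p r → Dterm Γ (.ucast l fip fmsg p q) r
  | ucast_right {l : L} {fip : S → IP} {fmsg : S → MSG} {p q r : Seqp S PN L IP MSG DATA} :
      Sterm Γ q r → Dterm Γ (.ucast l fip fmsg p q) r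
  | bcast {l : L} {fmsg : S → MSG} {p r : Seqp S PN L IP MSG DATA} :
      Sterm Γ p r → Dterm Γ (.bcast l fmsg p) r
  | gcast {l : L} {fips : S → Set IP} {fmsg : S → MSG} {p r : Seqp S PN L IP MSG DATA} :
      Sterm Γ p r → Dterm Γ (.gcast l fips fmsg p) r
  | send {l : L} {fmsg : S → MSG} {p r : Seqp S PN L IP MSG DATA} :
      Sterm Γ p r → Dterm Γ (.send l fmsg p) r
  | deliver {l : L} {fdata : S → DATA} {p r : Seqp S PN L IP MSG DATA} :
      Sterm Γ p r → Dterm Γ (.deliver l fdata p) r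
  | receive {l : L} {u : MSG → S → S} {p r : Seqp S PN L IP MSG DATA} :
      Sterm Γ p r → Dterm Γ (.receive l u p) r

/-- `dterms Γ p` as a set. -/
def dterms (Γ : PN → Seqp S PN L IP MSG DATA) (p : Seqp S PN L IP MSG DATA) :
    Set (Seqp S PN L IP MSG DATA) :=
  {q | Dterm Γ p q}

/-- `Cterm Γ p` holds iff `p ∈ cterms Γ`, the smallest set containing all
`sterms Γ (Γ pn)` and closed under `dterms`. -/
inductive Cterm (Γ : PN → Seqp S PN L IP MSG DATA) : Seqp S PN L IP MSG DATA → Prop where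
  | sterm {pn : PN} {p : Seqp S PN L IP MSG DATA} : Sterm Γ (Γ pn) p → Cterm Γ p
  | dterm {p q : Seqp S PN L IP MSG DATA} : Cterm Γ p → Dterm Γ p q → Cterm Γ q

/-- `cterms Γ` as a set. -/
def cterms (Γ : PN → Seqp S PN L IP MSG DATA) : Set (Seqp S PN L IP MSG DATA) :=
  {p | Cterm Γ p}

/-- Subterms of a sequential process term. -/
def subterms : Seqp S PN L IP MSG DATA → Set (Seqp S PN L IP MSG DATA)
  | .assign l u p => insert (.assign l u p) (subterms p)
  | .guard l g p => insert (.guard l g p) (subterms p)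
  | .ucast l fip fmsg p q => insert (.ucast l fip fmsg p q) (subterms p ∪ subterms q)
  | .bcast l fmsg p => insert (.bcast l fmsg p) (subterms p)
  | .gcast l fips fmsg p => insert (.gcast l fips fmsg p) (subterms p)
  | .send l fmsg p => insert (.send l fmsg p) (subterms p)
  | .deliver l fdata p => insert (.deliver l fdata p) (subterms p)
  | .receive l u p => insert (.receive l u p) (subterms p)
  | .choice p q => insert (.choice p q) (subterms p ∪ subterms q)
  | .call pn => {.call pn}



/-- Actions of sequential AWN processes. -/
inductive SeqAction (IP MSG DATA : Type) : Type where
  | broadcast  (m : MSG)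
  | groupcast  (ips : Set IP) (m : MSG)
  | unicast    (i : IP) (m : MSG)
  | notunicast (i : IP)
  | send       (m : MSG)
  | deliver    (d : DATA)
  | receive    (m : MSG)
  | tau

variable {S PN L IP MSG DATA : Type}

def SeqAction.isReceive : SeqAction IP MSG DATA → Prop
  | .receive _ => True
  | _ => False

def SeqAction.isSend : SeqAction IP MSG DATA → Prop
  | .send _ => True
  | _ => False

/-- The SOS rules of sequential AWN processes. -/
inductive SeqpSos (Γ : PN → Seqp S PN L IP MSG DATA) :
    S × Seqp S PN L IP MSG DATA → SeqAction IP MSG DATA → S × Seqp S PN L IP MSG DATA → Prop where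
  | assign {ξ : S} {l : L} {u : S → S} {p : Seqp S PN L IP MSG DATA} :
      SeqpSos Γ (ξ, .assign l u p) .tau (u ξ, p)
  | guard {ξ ξ' : S} {l : L} {g : S → Set S} {p : Seqp S PN L IP MSG DATA} :
      ξ' ∈ g ξ → SeqpSos Γ (ξ, .guard l g p) .tau (ξ', p)
  | ucast {ξ : S} {l : L} {fip : S → IP} {fmsg : S → MSG} {p q : Seqp S PN L IP MSG DATA} :
      SeqpSos Γ (ξ, .ucast l fip fmsg p q) (.unicast (fip ξ) (fmsg ξ)) (ξ, p)
  | notucast {ξ : S} {l : L} {fip : S → IP} {fmsg : S → MSG} {p q : Seqp S PN L IP MSG DATA} :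
      SeqpSos Γ (ξ, .ucast l fip fmsg p q) (.notunicast (fip ξ)) (ξ, q)
  | bcast {ξ : S} {l : L} {fmsg : S → MSG} {p : Seqp S PN L IP MSG DATA} :
      SeqpSos Γ (ξ, .bcast l fmsg p) (.broadcast (fmsg ξ)) (ξ, p)
  | gcast {ξ : S} {l : L} {fips : S → Set IP} {fmsg : S → MSG} {p : Seqp S PN L IP MSG DATA} :
      SeqpSos Γ (ξ, .gcast l fips fmsg p) (.groupcast (fips ξ) (fmsg ξ)) (ξ, p)
  | send {ξ : S} {l : L} {fmsg : S → MSG} {p : Seqp S PN L IP MSG DATA} :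
      SeqpSos Γ (ξ, .send l fmsg p) (.send (fmsg ξ)) (ξ, p)
  | deliver {ξ : S} {l : L} {fdata : S → DATA} {p : Seqp S PN L IP MSG DATA} :
      SeqpSos Γ (ξ, .deliver l fdata p) (.deliver (fdata ξ)) (ξ, p)
  | receive {ξ : S} {l : L} {u : MSG → S → S} {p : Seqp S PN L IP MSG DATA} (m : MSG) :
      SeqpSos Γ (ξ, .receive l u p) (.receive m) (u m ξ, p)
  | choice_left {ξ ξ' : S} {p q p' : Seqp S PN L IP MSG DATA} {a : SeqAction IP MSG DATA} :
      SeqpSos Γ (ξ, p) a (ξ', p') → SeqpSos Γ (ξ, .choice p q) a (ξ', p')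
  | choice_right {ξ ξ' : S} {p q p' : Seqp S PN L IP MSG DATA} {a : SeqAction IP MSG DATA} :
      SeqpSos Γ (ξ, q) a (ξ', p') → SeqpSos Γ (ξ, .choice p q) a (ξ', p')
  | call {ξ ξ' : S} {pn : PN} {p' : Seqp S PN L IP MSG DATA} {a : SeqAction IP MSG DATA} :
      SeqpSos Γ (ξ, Γ pn) a (ξ', p') → SeqpSos Γ (ξ, .call pn) a (ξ', p')

/-- An automaton: a set of initial states and a transition relation. -/
structure Automaton (σ α : Type) : Type where
  init : Set σ
  trans : σ → α → σ → Prop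

/-- Reachability under an assumption `I` on actions. -/
inductive Reachable {σ α : Type} (A : Automaton σ α) (I : α → Prop) : σ → Prop where
  | init {s : σ} : s ∈ A.init → Reachable A I s
  | step {s s' : σ} {a : α} : Reachable A I s → A.trans s a s' → I a → Reachable A I s'

/-- Invariance: `A ⊨ (I →) P`. -/
def Invariant {σ α : Type} (A : Automaton σ α) (I : α → Prop) (P : σ → Prop) : Prop :=
  ∀ s, Reachable A I s → P s

/-- Step invariance: `A ⊨A (I →) Q`. -/
def StepInvariant {σ α : Type} (A : Automaton σ α) (I : α → Prop) (Q : σ → α → σ → Prop) : Prop :=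
  ∀ s a s', Reachable A I s → A.trans s a s' → I a → Q s a s'

/-- The label(s) decorating the top-most constructor of a term. -/
def topLabels : Seqp S PN L IP MSG DATA → Set L
  | .assign l _ _ => {l}
  | .guard l _ _ => {l}
  | .ucast l _ _ _ _ => {l}
  | .bcast l _ _ => {l}
  | .gcast l _ _ _ => {l}
  | .send l _ _ => {l}
  | .deliver l _ _ => {l}
  | .receive l _ _ => {l}
  | .choice _ _ => ∅
  | .call _ => ∅

/-- The labels of the start terms of `p`. -/
def labels (Γ : PN → Seqp S PN L IP MSG DATA) (p : Seqp S PN L IP MSG DATA) : Set L :=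
  {l | ∃ q, Sterm Γ p q ∧ l ∈ topLabels q}

/-- `onl Γ P` holds of `(ξ, p)` iff `P (ξ, l)` for every label `l` of `p`. -/
def onl {X : Type} (Γ : PN → Seqp S PN L IP MSG DATA) (P : X × L → Prop)
    (s : X × Seqp S PN L IP MSG DATA) : Prop :=
  ∀ l ∈ labels Γ s.2, P (s.1, l)

/-- All control terms of initial states stem from the specification. -/
def ControlWithin {X : Type} (Γ : PN → Seqp S PN L IP MSG DATA)
    (I : Set (X × Seqp S PN L IP MSG DATA)) : Prop :=
  ∀ s ∈ I, ∃ pn, s.2 ∈ subterms (Γ pn)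

/-- Every subterm of the specification has exactly one label. -/
def SimpleLabels (Γ : PN → Seqp S PN L IP MSG DATA) : Prop :=
  ∀ pn p, p ∈ subterms (Γ pn) → ∃ l, labels Γ p = {l}



/-- Open SOS rules for sequential processes: the state pairs a global state
`σ : IP → S` with a control term, and the rules constrain only entry `i`. -/
inductive OseqpSos (Γ : PN → Seqp S PN L IP MSG DATA) (i : IP) :
    (IP → S) × Seqp S PN L IP MSG DATA → SeqAction IP MSG DATA →
    (IP → S) × Seqp S PN L IP MSG DATA → Prop where
  | assign {σ σ' : IP → S} {l : L} {u : S → S} {p : Seqp S PN L IP MSG DATA} :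
      σ' i = u (σ i) → OseqpSos Γ i (σ, .assign l u p) .tau (σ', p)
  | guard {σ σ' : IP → S} {l : L} {g : S → Set S} {p : Seqp S PN L IP MSG DATA} :
      σ' i ∈ g (σ i) → OseqpSos Γ i (σ, .guard l g p) .tau (σ', p)
  | ucast {σ σ' : IP → S} {l : L} {fip : S → IP} {fmsg : S → MSG}
      {p q : Seqp S PN L IP MSG DATA} :
      σ' i = σ i →
      OseqpSos Γ i (σ, .ucast l fip fmsg p q) (.unicast (fip (σ i)) (fmsg (σ i))) (σ', p)
  | notucast {σ σ' : IP → S} {l : L} {fip : S → IP} {fmsg : S → MSG}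
      {p q : Seqp S PN L IP MSG DATA} :
      σ' i = σ i →
      OseqpSos Γ i (σ, .ucast l fip fmsg p q) (.notunicast (fip (σ i))) (σ', q)
  | bcast {σ σ' : IP → S} {l : L} {fmsg : S → MSG} {p : Seqp S PN L IP MSG DATA} :
      σ' i = σ i → OseqpSos Γ i (σ, .bcast l fmsg p) (.broadcast (fmsg (σ i))) (σ', p)
  | gcast {σ σ' : IP → S} {l : L} {fips : S → Set IP} {fmsg : S → MSG}
      {p : Seqp S PN L IP MSG DATA} :
      σ' i = σ i →
      OseqpSos Γ i (σ, .gcast l fips fmsg p) (.groupcast (fips (σ i)) (fmsg (σ i))) (σ', p)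
  | send {σ σ' : IP → S} {l : L} {fmsg : S → MSG} {p : Seqp S PN L IP MSG DATA} :
      σ' i = σ i → OseqpSos Γ i (σ, .send l fmsg p) (.send (fmsg (σ i))) (σ', p)
  | deliver {σ σ' : IP → S} {l : L} {fdata : S → DATA} {p : Seqp S PN L IP MSG DATA} :
      σ' i = σ i → OseqpSos Γ i (σ, .deliver l fdata p) (.deliver (fdata (σ i))) (σ', p)
  | receive {σ σ' : IP → S} {l : L} {u : MSG → S → S} {p : Seqp S PN L IP MSG DATA} (m : MSG) :
      σ' i = u m (σ i) → OseqpSos Γ i (σ, .receive l u p) (.receive m) (σ', p)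
  | choice_left {σ σ' : IP → S} {p q p' : Seqp S PN L IP MSG DATA} {a : SeqAction IP MSG DATA} :
      OseqpSos Γ i (σ, p) a (σ', p') → OseqpSos Γ i (σ, .choice p q) a (σ', p')
  | choice_right {σ σ' : IP → S} {p q p' : Seqp S PN L IP MSG DATA} {a : SeqAction IP MSG DATA} :
      OseqpSos Γ i (σ, q) a (σ', p') → OseqpSos Γ i (σ, .choice p q) a (σ', p')
  | call {σ σ' : IP → S} {pn : PN} {p' : Seqp S PN L IP MSG DATA} {a : SeqAction IP MSG DATA} :
      OseqpSos Γ i (σ, Γ pn) a (σ', p') → OseqpSos Γ i (σ, .call pn) a (σ', p')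

/-- Open reachability: `S` constrains synchronized steps, `U` interleaved environment steps. -/
inductive Oreachable {G LS α : Type} (A : Automaton (G × LS) α)
    (S : G → G → α → Prop) (U : G → G → Prop) : G × LS → Prop where
  | init {s : G × LS} : s ∈ A.init → Oreachable A S U s
  | other {σ σ' : G} {ζ : LS} :
      Oreachable A S U (σ, ζ) → U σ σ' → Oreachable A S U (σ', ζ)
  | step {σ σ' : G} {ζ ζ' : LS} {a : α} :
      Oreachable A S U (σ, ζ) → A.trans (σ, ζ) a (σ', ζ') → S σ σ' a →
      Oreachable A S U (σ', ζ')

/-- Open invariance: `A ⊨ (S, U →) P`. -/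
def Oinvariant {G LS α : Type} (A : Automaton (G × LS) α)
    (S : G → G → α → Prop) (U : G → G → Prop) (P : G × LS → Prop) : Prop :=
  ∀ s, Oreachable A S U s → P s

/-- Open step invariance: `A ⊨A (S, U →) Q`. -/
def OstepInvariant {G LS α : Type} (A : Automaton (G × LS) α)
    (S : G → G → α → Prop) (U : G → G → Prop) (Q : (G × LS) → α → (G × LS) → Prop) : Prop :=
  ∀ s a s', Oreachable A S U s → A.trans s a s' → S s.1 s'.1 a → Q s a s'

def otherwith {α : Type} (E : S → S → Prop) (N : Set IP) (I : (IP → S) → α → Prop)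
    (σ σ' : IP → S) (a : α) : Prop :=
  (∀ j ∉ N, E (σ j) (σ' j)) ∧ I σ a

def other (F : S → S → Prop) (N : Set IP) (σ σ' : IP → S) : Prop :=
  (∀ j ∈ N, σ' j = σ j) ∧ (∀ j ∉ N, F (σ j) (σ' j))

def orecvmsg (R : (IP → S) → MSG → Prop) (σ : IP → S) : SeqAction IP MSG DATA → Prop :=
  fun a => ∀ m, a = .receive m → R σ m



/-- Actions at the node and network level. -/
inductive NodeAction (IP MSG DATA : Type) : Type where
  | cast       (R : Set IP) (m : MSG)              -- R:*cast(m)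
  | arrive     (H K : Set IP) (m : MSG)            -- H¬K:arrive(m)
  | deliver    (i : IP) (d : DATA)
  | connect    (i i' : IP)
  | disconnect (i i' : IP)
  | tau

/-- The local (non-synchronizing) node actions. -/
def NodeAction.isLocal : NodeAction IP MSG DATA → Prop
  | .tau => True
  | .deliver _ _ => True
  | _ => False

/-- States of (partial) networks: a tree of node states `s_R`. -/
inductive NetState (PS IP : Type) : Type where
  | node   (i : IP) (s : PS) (R : Set IP)
  | subnet (s t : NetState PS IP)

/-- The addresses occurring in a network state. -/
def netIps {PS : Type} : NetState PS IP → Set IP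
  | .node i _ _ => {i}
  | .subnet s t => netIps s ∪ netIps t

/-- Standard node SOS rules, wrapping a process automaton at address `i`. -/
inductive NodeSos {PS : Type} (A : Automaton PS (SeqAction IP MSG DATA)) (i : IP) :
    NetState PS IP → NodeAction IP MSG DATA → NetState PS IP → Prop where
  | bcast {s s' : PS} {R : Set IP} {m : MSG} :
      A.trans s (.broadcast m) s' → NodeSos A i (.node i s R) (.cast R m) (.node i s' R)
  | gcast {s s' : PS} {R D : Set IP} {m : MSG} :
      A.trans s (.groupcast D m) s' → NodeSos A i (.node i s R) (.cast (R ∩ D) m) (.node i s' R)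
  | ucast {s s' : PS} {R : Set IP} {d : IP} {m : MSG} :
      d ∈ R → A.trans s (.unicast d m) s' →
      NodeSos A i (.node i s R) (.cast {d} m) (.node i s' R)
  | notucast {s s' : PS} {R : Set IP} {d : IP} :
      d ∉ R → A.trans s (.notunicast d) s' → NodeSos A i (.node i s R) .tau (.node i s' R)
  | deliver {s s' : PS} {R : Set IP} {d : DATA} :
      A.trans s (.deliver d) s' → NodeSos A i (.node i s R) (.deliver i d) (.node i s' R)
  | tau {s s' : PS} {R : Set IP} :
      A.trans s .tau s' → NodeSos A i (.node i s R) .tau (.node i s' R)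
  | receive {s s' : PS} {R : Set IP} {m : MSG} :
      A.trans s (.receive m) s' →
      NodeSos A i (.node i s R) (.arrive {i} ∅ m) (.node i s' R)
  | not_arrive {s : PS} {R : Set IP} {m : MSG} :
      NodeSos A i (.node i s R) (.arrive ∅ {i} m) (.node i s R)
  | connect_this {s : PS} {R : Set IP} {i' : IP} :
      NodeSos A i (.node i s R) (.connect i i') (.node i s (R ∪ {i'}))
  | connect_that {s : PS} {R : Set IP} {i' : IP} :
      NodeSos A i (.node i s R) (.connect i' i) (.node i s (R ∪ {i'}))
  | connect_other {s : PS} {R : Set IP} {i' i'' : IP} :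
      i ≠ i' → i ≠ i'' →
      NodeSos A i (.node i s R) (.connect i' i'') (.node i s R)
  | disconnect_this {s : PS} {R : Set IP} {i' : IP} :
      NodeSos A i (.node i s R) (.disconnect i i') (.node i s (R \ {i'}))
  | disconnect_that {s : PS} {R : Set IP} {i' : IP} :
      NodeSos A i (.node i s R) (.disconnect i' i) (.node i s (R \ {i'}))
  | disconnect_other {s : PS} {R : Set IP} {i' i'' : IP} :
      i ≠ i' → i ≠ i'' →
      NodeSos A i (.node i s R) (.disconnect i' i'') (.node i s R)

/-- The node expression `⟨i : A : R₀⟩`. -/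
def node {PS : Type} (i : IP) (A : Automaton PS (SeqAction IP MSG DATA)) (R₀ : Set IP) :
    Automaton (NetState PS IP) (NodeAction IP MSG DATA) :=
  ⟨{x | ∃ s ∈ A.init, x = .node i s R₀}, NodeSos A i⟩

/-- Open node SOS rules, over a global state `σ : IP → S`. -/
inductive OnodeSos {PS : Type} (A : Automaton ((IP → S) × PS) (SeqAction IP MSG DATA)) (i : IP) :
    (IP → S) × NetState PS IP → NodeAction IP MSG DATA → (IP → S) × NetState PS IP → Prop where
  | bcast {σ σ' : IP → S} {s s' : PS} {R : Set IP} {m : MSG} :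
      A.trans (σ, s) (.broadcast m) (σ', s') →
      OnodeSos A i (σ, .node i s R) (.cast R m) (σ', .node i s' R)
  | gcast {σ σ' : IP → S} {s s' : PS} {R D : Set IP} {m : MSG} :
      A.trans (σ, s) (.groupcast D m) (σ', s') →
      OnodeSos A i (σ, .node i s R) (.cast (R ∩ D) m) (σ', .node i s' R)
  | ucast {σ σ' : IP → S} {s s' : PS} {R : Set IP} {d : IP} {m : MSG} :
      d ∈ R → A.trans (σ, s) (.unicast d m) (σ', s') →
      OnodeSos A i (σ, .node i s R) (.cast {d} m) (σ', .node i s' R)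
  | notucast {σ σ' : IP → S} {s s' : PS} {R : Set IP} {d : IP} :
      d ∉ R → A.trans (σ, s) (.notunicast d) (σ', s') → (∀ j, j ≠ i → σ' j = σ j) →
      OnodeSos A i (σ, .node i s R) .tau (σ', .node i s' R)
  | deliver {σ σ' : IP → S} {s s' : PS} {R : Set IP} {d : DATA} :
      A.trans (σ, s) (.deliver d) (σ', s') → (∀ j, j ≠ i → σ' j = σ j) →
      OnodeSos A i (σ, .node i s R) (.deliver i d) (σ', .node i s' R)
  | tau {σ σ' : IP → S} {s s' : PS} {R : Set IP} :
      A.trans (σ, s) .tau (σ', s') → (∀ j, j ≠ i → σ' j = σ j) →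
      OnodeSos A i (σ, .node i s R) .tau (σ', .node i s' R)
  | receive {σ σ' : IP → S} {s s' : PS} {R : Set IP} {m : MSG} :
      A.trans (σ, s) (.receive m) (σ', s') →
      OnodeSos A i (σ, .node i s R) (.arrive {i} ∅ m) (σ', .node i s' R)
  | not_arrive {σ σ' : IP → S} {s : PS} {R : Set IP} {m : MSG} :
      σ' i = σ i →
      OnodeSos A i (σ, .node i s R) (.arrive ∅ {i} m) (σ', .node i s R)
  | connect_this {σ σ' : IP → S} {s : PS} {R : Set IP} {i' : IP} :
      σ' i = σ i →
      OnodeSos A i (σ, .node i s R) (.connect i i') (σ', .node i s (R ∪ {i'}))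
  | connect_that {σ σ' : IP → S} {s : PS} {R : Set IP} {i' : IP} :
      σ' i = σ i →
      OnodeSos A i (σ, .node i s R) (.connect i' i) (σ', .node i s (R ∪ {i'}))
  | connect_other {σ σ' : IP → S} {s : PS} {R : Set IP} {i' i'' : IP} :
      i ≠ i' → i ≠ i'' → σ' i = σ i →
      OnodeSos A i (σ, .node i s R) (.connect i' i'') (σ', .node i s R)
  | disconnect_this {σ σ' : IP → S} {s : PS} {R : Set IP} {i' : IP} :
      σ' i = σ i →
      OnodeSos A i (σ, .node i s R) (.disconnect i i') (σ', .node i s (R \ {i'}))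
  | disconnect_that {σ σ' : IP → S} {s : PS} {R : Set IP} {i' : IP} :
      σ' i = σ i →
      OnodeSos A i (σ, .node i s R) (.disconnect i' i) (σ', .node i s (R \ {i'}))
  | disconnect_other {σ σ' : IP → S} {s : PS} {R : Set IP} {i' i'' : IP} :
      i ≠ i' → i ≠ i'' → σ' i = σ i →
      OnodeSos A i (σ, .node i s R) (.disconnect i' i'') (σ', .node i s R)

/-- The open node expression `⟨i : A : R₀⟩ₒ`. -/
def onode {PS : Type} (i : IP) (A : Automaton ((IP → S) × PS) (SeqAction IP MSG DATA))
    (R₀ : Set IP) : Automaton ((IP → S) × NetState PS IP) (NodeAction IP MSG DATA) :=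
  ⟨{x | ∃ σ s, (σ, s) ∈ A.init ∧ x = (σ, .node i s R₀)}, OnodeSos A i⟩

def oarrivemsg (I : (IP → S) → MSG → Prop) (σ : IP → S) : NodeAction IP MSG DATA → Prop :=
  fun a => ∀ H K m, a = .arrive H K m → I σ m



/-! ### Message queues and local parallel composition -/

/-- Transitions of the message queue `qmsg`. -/
inductive QmsgSos : List MSG → SeqAction IP MSG DATA → List MSG → Prop where
  | receive (q : List MSG) (m : MSG) : QmsgSos q (.receive m) (q ++ [m])
  | send (m : MSG) (q : List MSG) : QmsgSos (m :: q) (.send m) q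

/-- The message queue automaton. -/
def qmsg : Automaton (List MSG) (SeqAction IP MSG DATA) :=
  ⟨{[]}, QmsgSos⟩

/-- Standard local parallel composition: receives of `A` synchronize
with sends of `B`, becoming `τ`. -/
inductive ParSos {PS QS : Type} (TA : PS → SeqAction IP MSG DATA → PS → Prop)
    (TB : QS → SeqAction IP MSG DATA → QS → Prop) :
    PS × QS → SeqAction IP MSG DATA → PS × QS → Prop where
  | left {s s' : PS} {q : QS} {a : SeqAction IP MSG DATA} :
      TA s a s' → ¬ a.isReceive → ParSos TA TB (s, q) a (s', q)
  | right {s : PS} {q q' : QS} {a : SeqAction IP MSG DATA} :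
      TB q a q' → ¬ a.isSend → ParSos TA TB (s, q) a (s, q')
  | comm {s s' : PS} {q q' : QS} {m : MSG} :
      TA s (.receive m) s' → TB q (.send m) q' → ParSos TA TB (s, q) .tau (s', q')

/-- `A ⟨⟨ B`. -/
def par {PS QS : Type} (A : Automaton PS (SeqAction IP MSG DATA))
    (B : Automaton QS (SeqAction IP MSG DATA)) :
    Automaton (PS × QS) (SeqAction IP MSG DATA) :=
  ⟨{x | x.1 ∈ A.init ∧ x.2 ∈ B.init}, ParSos A.trans B.trans⟩

/-- Open local parallel composition with a (closed) automaton `B` on the right: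
only the left component constrains the global state. -/
inductive OparSos {G PS QS : Type} (TA : G × PS → SeqAction IP MSG DATA → G × PS → Prop)
    (TB : QS → SeqAction IP MSG DATA → QS → Prop) :
    G × (PS × QS) → SeqAction IP MSG DATA → G × (PS × QS) → Prop where
  | left {σ σ' : G} {s s' : PS} {q : QS} {a : SeqAction IP MSG DATA} :
      TA (σ, s) a (σ', s') → ¬ a.isReceive → OparSos TA TB (σ, (s, q)) a (σ', (s', q))
  | right {σ : G} {s : PS} {q q' : QS} {a : SeqAction IP MSG DATA} :
      TB q a q' → ¬ a.isSend → OparSos TA TB (σ, (s, q)) a (σ, (s, q'))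
  | comm {σ σ' : G} {s s' : PS} {q q' : QS} {m : MSG} :
      TA (σ, s) (.receive m) (σ', s') → TB q (.send m) q' →
      OparSos TA TB (σ, (s, q)) .tau (σ', (s', q'))

/-- `A ⟨⟨ᵢ qmsg`: the open parallel composition of `A` with the message queue. -/
def oparQmsg {G PS : Type} (A : Automaton (G × PS) (SeqAction IP MSG DATA)) :
    Automaton (G × (PS × List MSG)) (SeqAction IP MSG DATA) :=
  ⟨{x | (x.1, x.2.1) ∈ A.init ∧ x.2.2 = []}, OparSos A.trans (qmsg (IP := IP) (DATA := DATA)).trans⟩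

/-! ### Network trees and partial networks -/

/-- Network structure terms. -/
inductive NetTree (IP : Type) : Type where
  | node (i : IP) (R : Set IP)
  | par (t₁ t₂ : NetTree IP)

/-- The addresses of a network tree. -/
def netTreeIps : NetTree IP → Set IP
  | .node i _ => {i}
  | .par t₁ t₂ => netTreeIps t₁ ∪ netTreeIps t₂

/-- Disjointness of the addresses of a network tree. -/
def WfNetTree : NetTree IP → Prop
  | .node _ _ => True
  | .par t₁ t₂ => netTreeIps t₁ ∩ netTreeIps t₂ = ∅ ∧ WfNetTree t₁ ∧ WfNetTree t₂

/-- Standard SOS rules for (partial) networks. -/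
inductive PnetSos {PS : Type}
    (T₁ T₂ : NetState PS IP → NodeAction IP MSG DATA → NetState PS IP → Prop) :
    NetState PS IP → NodeAction IP MSG DATA → NetState PS IP → Prop where
  | cast_left {s s' t t' : NetState PS IP} {R H K : Set IP} {m : MSG} :
      T₁ s (.cast R m) s' → T₂ t (.arrive H K m) t' → H ⊆ R → K ∩ R = ∅ →
      PnetSos T₁ T₂ (.subnet s t) (.cast R m) (.subnet s' t')
  | cast_right {s s' t t' : NetState PS IP} {R H K : Set IP} {m : MSG} :
      T₁ s (.arrive H K m) s' → T₂ t (.cast R m) t' → H ⊆ R → K ∩ R = ∅ →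
      PnetSos T₁ T₂ (.subnet s t) (.cast R m) (.subnet s' t')
  | arrive {s s' t t' : NetState PS IP} {H₁ K₁ H₂ K₂ : Set IP} {m : MSG} :
      T₁ s (.arrive H₁ K₁ m) s' → T₂ t (.arrive H₂ K₂ m) t' →
      PnetSos T₁ T₂ (.subnet s t) (.arrive (H₁ ∪ H₂) (K₁ ∪ K₂) m) (.subnet s' t')
  | tau_left {s s' t : NetState PS IP} :
      T₁ s .tau s' → PnetSos T₁ T₂ (.subnet s t) .tau (.subnet s' t)
  | tau_right {s t t' : NetState PS IP} :
      T₂ t .tau t' → PnetSos T₁ T₂ (.subnet s t) .tau (.subnet s t')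
  | deliver_left {s s' t : NetState PS IP} {i : IP} {d : DATA} :
      T₁ s (.deliver i d) s' → PnetSos T₁ T₂ (.subnet s t) (.deliver i d) (.subnet s' t)
  | deliver_right {s t t' : NetState PS IP} {i : IP} {d : DATA} :
      T₂ t (.deliver i d) t' → PnetSos T₁ T₂ (.subnet s t) (.deliver i d) (.subnet s t')
  | connect {s s' t t' : NetState PS IP} {i i' : IP} :
      T₁ s (.connect i i') s' → T₂ t (.connect i i') t' →
      PnetSos T₁ T₂ (.subnet s t) (.connect i i') (.subnet s' t')
  | disconnect {s s' t t' : NetState PS IP} {i i' : IP} :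
      T₁ s (.disconnect i i') s' → T₂ t (.disconnect i i') t' →
      PnetSos T₁ T₂ (.subnet s t) (.disconnect i i') (.subnet s' t')

/-- The standard network automaton of a network tree. -/
def pnet {PS : Type} (np : IP → Automaton PS (SeqAction IP MSG DATA)) :
    NetTree IP → Automaton (NetState PS IP) (NodeAction IP MSG DATA)
  | .node i R => node i (np i) R
  | .par t₁ t₂ =>
      ⟨{x | ∃ s t, s ∈ (pnet np t₁).init ∧ t ∈ (pnet np t₂).init ∧ x = .subnet s t},
       PnetSos (pnet np t₁).trans (pnet np t₂).trans⟩

/-- Open SOS rules for (partial) networks. -/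
inductive OpnetSos {PS : Type}
    (T₁ T₂ : (IP → S) × NetState PS IP → NodeAction IP MSG DATA →
             (IP → S) × NetState PS IP → Prop) :
    (IP → S) × NetState PS IP → NodeAction IP MSG DATA → (IP → S) × NetState PS IP → Prop where
  | cast_left {σ σ' : IP → S} {s s' t t' : NetState PS IP} {R H K : Set IP} {m : MSG} :
      T₁ (σ, s) (.cast R m) (σ', s') → T₂ (σ, t) (.arrive H K m) (σ', t') →
      H ⊆ R → K ∩ R = ∅ →
      OpnetSos T₁ T₂ (σ, .subnet s t) (.cast R m) (σ', .subnet s' t')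
  | cast_right {σ σ' : IP → S} {s s' t t' : NetState PS IP} {R H K : Set IP} {m : MSG} :
      T₁ (σ, s) (.arrive H K m) (σ', s') → T₂ (σ, t) (.cast R m) (σ', t') →
      H ⊆ R → K ∩ R = ∅ →
      OpnetSos T₁ T₂ (σ, .subnet s t) (.cast R m) (σ', .subnet s' t')
  | arrive {σ σ' : IP → S} {s s' t t' : NetState PS IP} {H₁ K₁ H₂ K₂ : Set IP} {m : MSG} :
      T₁ (σ, s) (.arrive H₁ K₁ m) (σ', s') → T₂ (σ, t) (.arrive H₂ K₂ m) (σ', t') →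
      OpnetSos T₁ T₂ (σ, .subnet s t) (.arrive (H₁ ∪ H₂) (K₁ ∪ K₂) m) (σ', .subnet s' t')
  | tau_left {σ σ' : IP → S} {s s' t : NetState PS IP} :
      T₁ (σ, s) .tau (σ', s') → (∀ j ∈ netIps t, σ' j = σ j) →
      OpnetSos T₁ T₂ (σ, .subnet s t) .tau (σ', .subnet s' t)
  | tau_right {σ σ' : IP → S} {s t t' : NetState PS IP} :
      T₂ (σ, t) .tau (σ', t') → (∀ j ∈ netIps s, σ' j = σ j) →
      OpnetSos T₁ T₂ (σ, .subnet s t) .tau (σ', .subnet s t')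
  | deliver_left {σ σ' : IP → S} {s s' t : NetState PS IP} {i : IP} {d : DATA} :
      T₁ (σ, s) (.deliver i d) (σ', s') → (∀ j ∈ netIps t, σ' j = σ j) →
      OpnetSos T₁ T₂ (σ, .subnet s t) (.deliver i d) (σ', .subnet s' t)
  | deliver_right {σ σ' : IP → S} {s t t' : NetState PS IP} {i : IP} {d : DATA} :
      T₂ (σ, t) (.deliver i d) (σ', t') → (∀ j ∈ netIps s, σ' j = σ j) →
      OpnetSos T₁ T₂ (σ, .subnet s t) (.deliver i d) (σ', .subnet s t')
  | connect {σ σ' : IP → S} {s s' t t' : NetState PS IP} {i i' : IP} :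
      T₁ (σ, s) (.connect i i') (σ', s') → T₂ (σ, t) (.connect i i') (σ', t') →
      OpnetSos T₁ T₂ (σ, .subnet s t) (.connect i i') (σ', .subnet s' t')
  | disconnect {σ σ' : IP → S} {s s' t t' : NetState PS IP} {i i' : IP} :
      T₁ (σ, s) (.disconnect i i') (σ', s') → T₂ (σ, t) (.disconnect i i') (σ', t') →
      OpnetSos T₁ T₂ (σ, .subnet s t) (.disconnect i i') (σ', .subnet s' t')

/-- The open network automaton of a network tree. -/
def opnet {PS : Type} (onp : IP → Automaton ((IP → S) × PS) (SeqAction IP MSG DATA)) :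
    NetTree IP → Automaton ((IP → S) × NetState PS IP) (NodeAction IP MSG DATA)
  | .node i R => onode i (onp i) R
  | .par t₁ t₂ =>
      ⟨{x | ∃ σ s t, (σ, s) ∈ (opnet onp t₁).init ∧ (σ, t) ∈ (opnet onp t₂).init ∧
            x = (σ, .subnet s t)},
       OpnetSos (opnet onp t₁).trans (opnet onp t₂).trans⟩

/-! ### Closed networks -/

/-- SOS rules closing a network: `*cast` becomes `τ`, `arrive` is forbidden. -/
inductive CnetSos {NS : Type} (T : NS → NodeAction IP MSG DATA → NS → Prop) :
    NS → NodeAction IP MSG DATA → NS → Prop where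
  | cast {s s' : NS} {R : Set IP} {m : MSG} : T s (.cast R m) s' → CnetSos T s .tau s'
  | tau {s s' : NS} : T s .tau s' → CnetSos T s .tau s'
  | deliver {s s' : NS} {i : IP} {d : DATA} :
      T s (.deliver i d) s' → CnetSos T s (.deliver i d) s'
  | connect {s s' : NS} {i i' : IP} :
      T s (.connect i i') s' → CnetSos T s (.connect i i') s'
  | disconnect {s s' : NS} {i i' : IP} :
      T s (.disconnect i i') s' → CnetSos T s (.disconnect i i') s'

/-- The closed network automaton. -/
def closed {NS : Type} (A : Automaton NS (NodeAction IP MSG DATA)) :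
    Automaton NS (NodeAction IP MSG DATA) :=
  ⟨A.init, CnetSos A.trans⟩

/-- Open SOS rules closing a network: additionally, global entries not
addressed within the network may not change. -/
inductive OcnetSos {LS : Type}
    (T : (IP → S) × NetState LS IP → NodeAction IP MSG DATA →
         (IP → S) × NetState LS IP → Prop) :
    (IP → S) × NetState LS IP → NodeAction IP MSG DATA → (IP → S) × NetState LS IP → Prop where
  | cast {σ σ' : IP → S} {s s' : NetState LS IP} {R : Set IP} {m : MSG} :
      (∀ j ∉ netIps s, σ' j = σ j) → T (σ, s) (.cast R m) (σ', s') →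
      OcnetSos T (σ, s) .tau (σ', s')
  | tau {σ σ' : IP → S} {s s' : NetState LS IP} :
      (∀ j ∉ netIps s, σ' j = σ j) → T (σ, s) .tau (σ', s') →
      OcnetSos T (σ, s) .tau (σ', s')
  | deliver {σ σ' : IP → S} {s s' : NetState LS IP} {i : IP} {d : DATA} :
      (∀ j ∉ netIps s, σ' j = σ j) → T (σ, s) (.deliver i d) (σ', s') →
      OcnetSos T (σ, s) (.deliver i d) (σ', s')
  | connect {σ σ' : IP → S} {s s' : NetState LS IP} {i i' : IP} :
      (∀ j ∉ netIps s, σ' j = σ j) → T (σ, s) (.connect i i') (σ', s') →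
      OcnetSos T (σ, s) (.connect i i') (σ', s')
  | disconnect {σ σ' : IP → S} {s s' : NetState LS IP} {i i' : IP} :
      (∀ j ∉ netIps s, σ' j = σ j) → T (σ, s) (.disconnect i i') (σ', s') →
      OcnetSos T (σ, s) (.disconnect i i') (σ', s')

/-- The closed open-network automaton. -/
def oclosed {LS : Type} (A : Automaton ((IP → S) × NetState LS IP) (NodeAction IP MSG DATA)) :
    Automaton ((IP → S) × NetState LS IP) (NodeAction IP MSG DATA) :=
  ⟨A.init, OcnetSos A.trans⟩

/-! ### The openproc locale -/

/-- The `openproc` locale: `sr` splits states of `np i` into a global and a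
local component, the initial states correspond, and `onp` simulates `np`. -/
structure Openproc {PS LS : Type} (np : IP → Automaton PS (SeqAction IP MSG DATA))
    (onp : IP → Automaton ((IP → S) × LS) (SeqAction IP MSG DATA))
    (sr : PS → S × LS) : Prop where
  init : ∀ (i : IP) (σ : IP → S) (ζ : LS),
      (∃ s ∈ (np i).init, (σ i, ζ) = sr s) →
      (∀ j, j ≠ i → ∃ s ∈ (np j).init, σ j = (sr s).1) →
      (σ, ζ) ∈ (onp i).init
  init_notempty : ∀ j, ((np j).init).Nonempty
  sim : ∀ (i : IP) (s s' : PS) (a : SeqAction IP MSG DATA) (σ σ' : IP → S),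
      (np i).trans s a s' → σ i = (sr s).1 → σ' i = (sr s').1 →
      (onp i).trans (σ, (sr s).2) a (σ', (sr s').2)

/-- An arbitrary initial global component for `np i`. -/
noncomputable def someinit {PS LS : Type} [Nonempty S]
    (np : IP → Automaton PS (SeqAction IP MSG DATA)) (sr : PS → S × LS) (i : IP) : S :=
  Classical.epsilon fun x => ∃ s ∈ (np i).init, x = (sr s).1

/-- The partial map from addresses to global components of node states. -/
def netlift {PS LS : Type} [DecidableEq IP] (sr : PS → S × LS) :
    NetState PS IP → IP → Option S
  | .node i s _ => fun j => if j = i then some (sr s).1 else none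
  | .subnet s t => fun j => (netlift sr s j).orElse (fun _ => netlift sr t j)

/-- The tree of local components of a network state. -/
def netliftl {PS LS : Type} (sr : PS → S × LS) : NetState PS IP → NetState LS IP
  | .node i s R => .node i (sr s).2 R
  | .subnet s t => .subnet (netliftl sr s) (netliftl sr t)

/-- The open state corresponding to a standard network state. -/
noncomputable def netgmap {PS LS : Type} [DecidableEq IP] [Nonempty S]
    (np : IP → Automaton PS (SeqAction IP MSG DATA)) (sr : PS → S × LS)
    (s : NetState PS IP) : (IP → S) × NetState LS IP :=
  ((fun j => (netlift sr s j).getD (someinit np sr j)), netliftl sr s)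



/-! ### The toy protocol -/

/-- Messages of the toy protocol. -/
inductive ToyMsg : Type where
  | newpkt (data dst : ℕ)
  | pkt (data src : ℕ)

/-- Data states of the toy protocol. -/
structure ToyState : Type where
  ip : ℕ
  no : ℕ
  num : ℕ
  sip : ℕ
  nhip : ℕ
  msg : ToyMsg

/-- The single process name of the toy protocol. -/
inductive ToyPN : Type where
  | PToy

abbrev ToySeqp : Type := Seqp ToyState ToyPN ℕ ℕ ToyMsg ℕ

/-- The `is_newpkt` guard: succeeds iff `msg ξ = newpkt d dst`, setting `num := d`. -/
def isNewpkt : ToyState → Set ToyState := fun ξ =>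
  {ξ' | ∃ d dst, ξ.msg = .newpkt d dst ∧ ξ' = { ξ with num := d }}

/-- The `is_pkt` guard: succeeds iff `msg ξ = pkt d src`, setting `num := d`, `sip := src`. -/
def isPkt : ToyState → Set ToyState := fun ξ =>
  {ξ' | ∃ d src, ξ.msg = .pkt d src ∧ ξ' = { ξ with num := d, sip := src }}

/-- `Toy()`: reset the local variables `msg`, `num` and `sip` to fixed
defaults and call `PToy`; `l` is the label of the resetting assignment. -/
def toyReset (l : ℕ) : ToySeqp :=
  .assign l (fun ξ => { ξ with msg := .newpkt 0 0, num := 0, sip := 0 }) (.call .PToy)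

/-- The specification `Γ_Toy` of the toy protocol. -/
def toySpec : ToyPN → ToySeqp := fun _ =>
  .receive 0 (fun m ξ => { ξ with msg := m }) <|
  .assign 1 (fun ξ => { ξ with nhip := ξ.ip }) <|
  .choice
    (.guard 2 isNewpkt <|
      .assign 3 (fun ξ => { ξ with no := max ξ.no ξ.num }) <|
      .bcast 4 (fun ξ => .pkt ξ.no ξ.ip) <| toyReset 5)
    (.guard 2 isPkt <|
      .choice
        (.guard 6 (fun ξ => if ξ.num ≥ ξ.no then {ξ} else ∅) <|
          .assign 7 (fun ξ => { ξ with no := ξ.num }) <|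
          .assign 8 (fun ξ => { ξ with nhip := ξ.sip }) <|
          .bcast 9 (fun ξ => .pkt ξ.no ξ.ip) <| toyReset 10)
        (.guard 6 (fun ξ => if ξ.num < ξ.no then {ξ} else ∅) <| toyReset 11))

/-- The initial data state of node `i`. -/
def toyInit (i : ℕ) : ToyState :=
  { ip := i, no := 0, num := 0, sip := 0, nhip := i, msg := .newpkt 0 0 }

instance : Nonempty ToyState := ⟨toyInit 0⟩

/-- The sequential toy-protocol automaton at address `i`. -/
def ptoy (i : ℕ) : Automaton (ToyState × ToySeqp) (SeqAction ℕ ToyMsg ℕ) :=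
  ⟨{(toyInit i, toySpec .PToy)}, fun s a s' => SeqpSos toySpec s a s'⟩

/-- The open sequential toy-protocol automaton at address `i`. -/
def optoy (i : ℕ) : Automaton ((ℕ → ToyState) × ToySeqp) (SeqAction ℕ ToyMsg ℕ) :=
  ⟨{x | x.1 i = toyInit i ∧ x.2 = toySpec .PToy}, fun s a s' => OseqpSos toySpec i s a s'⟩

/-- The `no` field never decreases. -/
def nosIncrease (ξ ξ' : ToyState) : Prop := ξ.no ≤ ξ'.no

/-- Incoming `pkt` messages reflect the state of the sender. -/
def msgNumOk (σ : ℕ → ToyState) : ToyMsg → Prop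
  | .pkt d src => d ≤ (σ src).no
  | .newpkt _ _ => True

/-- `sr` for the toy protocol composed with `qmsg`. -/
def srToy : (ToyState × ToySeqp) × List ToyMsg → ToyState × (ToySeqp × List ToyMsg) :=
  fun s => (s.1.1, (s.1.2, s.2))

/-- Lift a predicate on global states to standard toy network states. -/
def toyNetglobal (P : (ℕ → ToyState) → Prop)
    (s : NetState ((ToyState × ToySeqp) × List ToyMsg) ℕ) : Prop :=
  P (fun j => ((netlift srToy s) j).getD (toyInit j))


/-! ### Auxiliary development for the proof -/

section ToyProofAux

abbrev TNP : ℕ → Automaton ((ToyState × ToySeqp) × List ToyMsg) (SeqAction ℕ ToyMsg ℕ) :=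
  fun i => par (ptoy i) qmsg

abbrev TNS : Type := NetState ((ToyState × ToySeqp) × List ToyMsg) ℕ

/-- names for the reachable control terms -/
def tr5 : ToySeqp := toyReset 5
def tb4 : ToySeqp := .bcast 4 (fun ξ => .pkt ξ.no ξ.ip) tr5
def ta3 : ToySeqp := .assign 3 (fun ξ => { ξ with no := max ξ.no ξ.num }) tb4
def tr10 : ToySeqp := toyReset 10
def tb9 : ToySeqp := .bcast 9 (fun ξ => .pkt ξ.no ξ.ip) tr10
def ta8 : ToySeqp := .assign 8 (fun ξ => { ξ with nhip := ξ.sip }) tb9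
def ta7 : ToySeqp := .assign 7 (fun ξ => { ξ with no := ξ.num }) ta8
def tg6a : ToySeqp := .guard 6 (fun ξ => if ξ.num ≥ ξ.no then {ξ} else ∅) ta7
def tr11 : ToySeqp := toyReset 11
def tg6b : ToySeqp := .guard 6 (fun ξ => if ξ.num < ξ.no then {ξ} else ∅) tr11
def tch2 : ToySeqp := .choice tg6a tg6b
def tgP : ToySeqp := .guard 2 isPkt tch2
def tgN : ToySeqp := .guard 2 isNewpkt ta3
def tch1 : ToySeqp := .choice tgN tgP
def ta1 : ToySeqp := .assign 1 (fun ξ => { ξ with nhip := ξ.ip }) tch1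
def tr0 : ToySeqp := .receive 0 (fun m ξ => { ξ with msg := m }) ta1

lemma spec_eq (pn : ToyPN) : toySpec pn = tr0 := rfl

/-- the control-term invariant of a node -/
def CtrlInv (σ : ℕ → ToyState) (ξ : ToyState) (p : ToySeqp) : Prop :=
  p = tr0 ∨
  (p = ta1 ∧ msgNumOk σ ξ.msg) ∨
  (p = tch1 ∧ msgNumOk σ ξ.msg ∧ ξ.nhip = ξ.ip) ∨
  (p = ta3 ∧ ξ.nhip = ξ.ip) ∨
  p = tb4 ∨ p = tr5 ∨
  (p = tch2 ∧ ξ.nhip = ξ.ip ∧ ξ.num ≤ (σ ξ.sip).no) ∨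
  (p = ta7 ∧ ξ.nhip = ξ.ip ∧ ξ.num ≤ (σ ξ.sip).no ∧ ξ.no ≤ ξ.num) ∨
  (p = ta8 ∧ ξ.nhip = ξ.ip ∧ ξ.no ≤ (σ ξ.sip).no) ∨
  p = tb9 ∨ p = tr10 ∨ p = tr11 ∨ p = .call .PToy

def nodeInv (σ : ℕ → ToyState) (i : ℕ) (x : (ToyState × ToySeqp) × List ToyMsg) : Prop :=
  x.1.1.ip = i ∧ x.1.1.no ≤ (σ x.1.1.nhip).no ∧ CtrlInv σ x.1.1 x.1.2 ∧
    ∀ m ∈ x.2, msgNumOk σ m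

def netInv (σ : ℕ → ToyState) : TNS → Prop
  | .node i x _ => nodeInv σ i x
  | .subnet s t => netInv σ s ∧ netInv σ t

def Agree (σ : ℕ → ToyState) : TNS → Prop
  | .node i x _ => σ i = x.1.1
  | .subnet s t => Agree σ s ∧ Agree σ t

def Disj : TNS → Prop
  | .node _ _ _ => True
  | .subnet s t => netIps s ∩ netIps t = ∅ ∧ Disj s ∧ Disj t

def Mono (σ σ' : ℕ → ToyState) : Prop := ∀ j, (σ j).no ≤ (σ' j).no

def Rel : Option ToyState → Option ToyState → Prop
  | none, none => True
  | some ξ, some ξ' => ξ.no ≤ ξ'.no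
  | _, _ => False

lemma msgNumOk_mono {σ σ'} (h : Mono σ σ') {m} (hm : msgNumOk σ m) : msgNumOk σ' m := by
  cases m with
  | newpkt d dst => trivial
  | pkt d src => exact le_trans hm (h src)

lemma CtrlInv_mono {σ σ'} (h : Mono σ σ') {ξ p} (hc : CtrlInv σ ξ p) : CtrlInv σ' ξ p := by
  unfold CtrlInv at *
  rcases hc with h1|⟨h1,h2⟩|⟨h1,h2,h3⟩|⟨h1,h2⟩|h1|h1|⟨h1,h2,h3⟩|⟨h1,h2,h3,h4⟩|⟨h1,h2,h3⟩|h1|h1|h1|h1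
  · exact Or.inl h1
  · exact Or.inr <| Or.inl ⟨h1, msgNumOk_mono h h2⟩
  · exact Or.inr <| Or.inr <| Or.inl ⟨h1, msgNumOk_mono h h2, h3⟩
  · exact Or.inr <| Or.inr <| Or.inr <| Or.inl ⟨h1, h2⟩
  · exact Or.inr <| Or.inr <| Or.inr <| Or.inr <| Or.inl h1
  · exact Or.inr <| Or.inr <| Or.inr <| Or.inr <| Or.inr <| Or.inl h1
  · exact Or.inr <| Or.inr <| Or.inr <| Or.inr <| Or.inr <| Or.inr <| Or.inl
      ⟨h1, h2, le_trans h3 (h _)⟩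
  · exact Or.inr <| Or.inr <| Or.inr <| Or.inr <| Or.inr <| Or.inr <| Or.inr <| Or.inl
      ⟨h1, h2, le_trans h3 (h _), h4⟩
  · exact Or.inr <| Or.inr <| Or.inr <| Or.inr <| Or.inr <| Or.inr <| Or.inr <| Or.inr <| Or.inl
      ⟨h1, h2, le_trans h3 (h _)⟩
  · exact Or.inr <| Or.inr <| Or.inr <| Or.inr <| Or.inr <| Or.inr <| Or.inr <| Or.inr <|
      Or.inr <| Or.inl h1
  · exact Or.inr <| Or.inr <| Or.inr <| Or.inr <| Or.inr <| Or.inr <| Or.inr <| Or.inr <|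
      Or.inr <| Or.inr <| Or.inl h1
  · exact Or.inr <| Or.inr <| Or.inr <| Or.inr <| Or.inr <| Or.inr <| Or.inr <| Or.inr <|
      Or.inr <| Or.inr <| Or.inr <| Or.inl h1
  · exact Or.inr <| Or.inr <| Or.inr <| Or.inr <| Or.inr <| Or.inr <| Or.inr <| Or.inr <|
      Or.inr <| Or.inr <| Or.inr <| Or.inr h1

lemma nodeInv_mono {σ σ'} (h : Mono σ σ') {i x} (hn : nodeInv σ i x) : nodeInv σ' i x :=
  ⟨hn.1, le_trans hn.2.1 (h _), CtrlInv_mono h hn.2.2.1,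
    fun m hm => msgNumOk_mono h (hn.2.2.2 m hm)⟩

lemma netInv_mono {σ σ'} (h : Mono σ σ') : ∀ {s : TNS}, netInv σ s → netInv σ' s := by
  intro s
  induction s with
  | node i x R => exact fun hn => nodeInv_mono h hn
  | subnet s t ihs iht => exact fun hn => ⟨ihs hn.1, iht hn.2⟩

/-- post-condition on the `nhip` invariant after a sequential step -/
def IPost (σ : ℕ → ToyState) (ξ ξ' : ToyState) : Prop :=
  ξ'.nhip = ξ'.ip ∨ ξ'.no ≤ (σ ξ'.nhip).no ∨ (ξ'.nhip = ξ.nhip ∧ ξ'.no = ξ.no)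

/-- characterization of the possible sequential steps -/
def SeqOut (σ : ℕ → ToyState) (ξ ξ' : ToyState) (p' : ToySeqp)
    (a : SeqAction ℕ ToyMsg ℕ) : Prop :=
  (a = .tau ∧ CtrlInv σ ξ' p' ∧ IPost σ ξ ξ') ∨
  (∃ m, a = .receive m ∧ ξ' = { ξ with msg := m } ∧ p' = ta1) ∨
  (a = .broadcast (.pkt ξ.no ξ.ip) ∧ ξ' = ξ ∧ CtrlInv σ ξ' p')

lemma seq_step {σ : ℕ → ToyState} {ξ ξ' : ToyState} {p p' : ToySeqp}
    {a : SeqAction ℕ ToyMsg ℕ}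
    (h : SeqpSos toySpec (ξ, p) a (ξ', p')) (hc : CtrlInv σ ξ p) :
    ξ'.ip = ξ.ip ∧ ξ.no ≤ ξ'.no ∧ SeqOut σ ξ ξ' p' a := by
  have C0 : ∀ ζ, CtrlInv σ ζ tr0 := fun _ => Or.inl rfl
  have C1 : ∀ ζ : ToyState, msgNumOk σ ζ.msg → CtrlInv σ ζ ta1 :=
    fun _ h => Or.inr <| Or.inl ⟨rfl, h⟩
  have C2 : ∀ ζ : ToyState, msgNumOk σ ζ.msg → ζ.nhip = ζ.ip → CtrlInv σ ζ tch1 :=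
    fun _ h h' => Or.inr <| Or.inr <| Or.inl ⟨rfl, h, h'⟩
  have C3 : ∀ ζ : ToyState, ζ.nhip = ζ.ip → CtrlInv σ ζ ta3 :=
    fun _ h => Or.inr <| Or.inr <| Or.inr <| Or.inl ⟨rfl, h⟩
  have C4 : ∀ ζ, CtrlInv σ ζ tb4 :=
    fun _ => Or.inr <| Or.inr <| Or.inr <| Or.inr <| Or.inl rfl
  have C5 : ∀ ζ, CtrlInv σ ζ tr5 :=
    fun _ => Or.inr <| Or.inr <| Or.inr <| Or.inr <| Or.inr <| Or.inl rfl
  have C6 : ∀ ζ : ToyState, ζ.nhip = ζ.ip → ζ.num ≤ (σ ζ.sip).no → CtrlInv σ ζ tch2 :=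
    fun _ h h' => Or.inr <| Or.inr <| Or.inr <| Or.inr <| Or.inr <| Or.inr <| Or.inl ⟨rfl, h, h'⟩
  have C7 : ∀ ζ : ToyState, ζ.nhip = ζ.ip → ζ.num ≤ (σ ζ.sip).no → ζ.no ≤ ζ.num →
      CtrlInv σ ζ ta7 :=
    fun _ h h' h'' => Or.inr <| Or.inr <| Or.inr <| Or.inr <| Or.inr <| Or.inr <| Or.inr <|
      Or.inl ⟨rfl, h, h', h''⟩
  have C8 : ∀ ζ : ToyState, ζ.nhip = ζ.ip → ζ.no ≤ (σ ζ.sip).no → CtrlInv σ ζ ta8 :=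
    fun _ h h' => Or.inr <| Or.inr <| Or.inr <| Or.inr <| Or.inr <| Or.inr <| Or.inr <| Or.inr <|
      Or.inl ⟨rfl, h, h'⟩
  have C9 : ∀ ζ, CtrlInv σ ζ tb9 :=
    fun _ => Or.inr <| Or.inr <| Or.inr <| Or.inr <| Or.inr <| Or.inr <| Or.inr <| Or.inr <|
      Or.inr <| Or.inl rfl
  have C10 : ∀ ζ, CtrlInv σ ζ tr10 :=
    fun _ => Or.inr <| Or.inr <| Or.inr <| Or.inr <| Or.inr <| Or.inr <| Or.inr <| Or.inr <|
      Or.inr <| Or.inr <| Or.inl rfl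
  have C11 : ∀ ζ, CtrlInv σ ζ tr11 :=
    fun _ => Or.inr <| Or.inr <| Or.inr <| Or.inr <| Or.inr <| Or.inr <| Or.inr <| Or.inr <|
      Or.inr <| Or.inr <| Or.inr <| Or.inl rfl
  have Cc : ∀ ζ, CtrlInv σ ζ (.call .PToy) :=
    fun _ => Or.inr <| Or.inr <| Or.inr <| Or.inr <| Or.inr <| Or.inr <| Or.inr <| Or.inr <|
      Or.inr <| Or.inr <| Or.inr <| Or.inr rfl
  rcases hc with h1|⟨h1,h2⟩|⟨h1,h2,h3⟩|⟨h1,h2⟩|h1|h1|⟨h1,h2,h3⟩|⟨h1,h2,h3,h4⟩|⟨h1,h2,h3⟩|h1|h1|h1|h1 <;>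
    subst h1
  · -- tr0
    cases h with
    | receive m => exact ⟨rfl, le_refl _, Or.inr <| Or.inl ⟨m, rfl, rfl, rfl⟩⟩
  · -- ta1
    cases h with
    | assign => exact ⟨rfl, le_refl _, Or.inl ⟨rfl, C2 _ h2 rfl, Or.inl rfl⟩⟩
  · -- tch1
    cases h with
    | choice_left h' =>
      cases h' with
      | guard hg =>
        obtain ⟨d, dst, hm, rfl⟩ := hg
        exact ⟨rfl, le_refl _, Or.inl ⟨rfl, C3 _ h3, Or.inr <| Or.inr ⟨rfl, rfl⟩⟩⟩
    | choice_right h' =>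
      cases h' with
      | guard hg =>
        obtain ⟨d, src, hm, rfl⟩ := hg
        rw [hm] at h2
        exact ⟨rfl, le_refl _, Or.inl ⟨rfl, C6 _ h3 h2, Or.inr <| Or.inr ⟨rfl, rfl⟩⟩⟩
  · -- ta3
    cases h with
    | assign =>
      exact ⟨rfl, le_max_left _ _, Or.inl ⟨rfl, C4 _, Or.inl h2⟩⟩
  · -- tb4
    cases h with
    | bcast => exact ⟨rfl, le_refl _, Or.inr <| Or.inr ⟨rfl, rfl, C5 _⟩⟩
  · -- tr5
    cases h with
    | assign => exact ⟨rfl, le_refl _, Or.inl ⟨rfl, Cc _, Or.inr <| Or.inr ⟨rfl, rfl⟩⟩⟩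
  · -- tch2
    cases h with
    | choice_left h' =>
      cases h' with
      | guard hg =>
        replace hg : ξ' ∈ (if ξ.num ≥ ξ.no then ({ξ} : Set ToyState) else ∅) := hg
        by_cases hge : ξ.num ≥ ξ.no
        · rw [if_pos hge] at hg
          obtain rfl := hg
          exact ⟨rfl, le_refl _, Or.inl ⟨rfl, C7 _ h2 h3 hge, Or.inr <| Or.inr ⟨rfl, rfl⟩⟩⟩
        · rw [if_neg hge] at hg
          exact absurd hg (Set.notMem_empty _)
    | choice_right h' =>
      cases h' with
      | guard hg =>
        replace hg : ξ' ∈ (if ξ.num < ξ.no then ({ξ} : Set ToyState) else ∅) := hg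
        by_cases hlt : ξ.num < ξ.no
        · rw [if_pos hlt] at hg
          obtain rfl := hg
          exact ⟨rfl, le_refl _, Or.inl ⟨rfl, C11 _, Or.inr <| Or.inr ⟨rfl, rfl⟩⟩⟩
        · rw [if_neg hlt] at hg
          exact absurd hg (Set.notMem_empty _)
  · -- ta7
    cases h with
    | assign => exact ⟨rfl, h4, Or.inl ⟨rfl, C8 _ h2 h3, Or.inl h2⟩⟩
  · -- ta8
    cases h with
    | assign =>
      exact ⟨rfl, le_refl _, Or.inl ⟨rfl, C9 _, Or.inr <| Or.inl h3⟩⟩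
  · -- tb9
    cases h with
    | bcast => exact ⟨rfl, le_refl _, Or.inr <| Or.inr ⟨rfl, rfl, C10 _⟩⟩
  · -- tr10
    cases h with
    | assign => exact ⟨rfl, le_refl _, Or.inl ⟨rfl, Cc _, Or.inr <| Or.inr ⟨rfl, rfl⟩⟩⟩
  · -- tr11
    cases h with
    | assign => exact ⟨rfl, le_refl _, Or.inl ⟨rfl, Cc _, Or.inr <| Or.inr ⟨rfl, rfl⟩⟩⟩
  · -- call
    cases h with
    | call h' =>
      cases h' with
      | receive m => exact ⟨rfl, le_refl _, Or.inr <| Or.inl ⟨m, rfl, rfl, rfl⟩⟩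

lemma netlift_node {i : ℕ} {x : (ToyState × ToySeqp) × List ToyMsg} {R : Set ℕ} {j : ℕ} :
    netlift srToy (NetState.node i x R) j = if j = i then some x.1.1 else none := rfl

lemma netlift_subnet {u v : TNS} {j : ℕ} :
    netlift srToy (NetState.subnet u v) j
      = (netlift srToy u j).orElse (fun _ => netlift srToy v j) := rfl

lemma netlift_none_iff : ∀ (s : TNS) (j : ℕ), netlift srToy s j = none ↔ j ∉ netIps s := by
  intro s
  induction s with
  | node i x R =>
    intro j
    rw [netlift_node]
    by_cases hj : j = i <;> simp [hj, netIps]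
  | subnet u v ihu ihv =>
    intro j
    rw [netlift_subnet]
    cases hu : netlift srToy u j with
    | none =>
      have h1 := (ihu j).mp hu
      show netlift srToy v j = none ↔ _
      rw [ihv j]
      constructor
      · intro h2 hmem
        rcases hmem with hmem | hmem
        exacts [h1 hmem, h2 hmem]
      · intro h2 hmem
        exact h2 (Set.mem_union_right _ hmem)
    | some ξ =>
      have hju : j ∈ netIps u := by
        by_contra hj
        rw [← ihu j, hu] at hj
        exact nomatch hj
      constructor
      · intro h; exact nomatch h
      · intro h; exact absurd (Set.mem_union_left _ hju) h

lemma agree_of_lookup : ∀ (σ : ℕ → ToyState) (s : TNS), Disj s →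
    (∀ j ξ, netlift srToy s j = some ξ → σ j = ξ) → Agree σ s := by
  intro σ s
  induction s with
  | node i x R =>
    intro _ h
    exact h i x.1.1 (by rw [netlift_node, if_pos rfl])
  | subnet u v ihu ihv =>
    intro hd h
    refine ⟨ihu hd.2.1 ?_, ihv hd.2.2 ?_⟩
    · intro j ξ hj
      refine h j ξ ?_
      rw [netlift_subnet, hj]
      rfl
    · intro j ξ hj
      have hjv : j ∈ netIps v := by
        by_contra hc
        rw [← netlift_none_iff v j, hj] at hc
        exact nomatch hc
      have hju : j ∉ netIps u := by
        intro hc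
        have : j ∈ netIps u ∩ netIps v := ⟨hc, hjv⟩
        rw [hd.1] at this
        exact this
      rw [← netlift_none_iff u j] at hju
      refine h j ξ ?_
      rw [netlift_subnet, hju, hj]
      rfl

lemma inv_extract {σ : ℕ → ToyState} : ∀ (s : TNS), netInv σ s →
    ∀ j ξ, netlift srToy s j = some ξ → ξ.no ≤ (σ ξ.nhip).no := by
  intro s
  induction s with
  | node i x R =>
    intro hinv j ξ hj
    rw [netlift_node] at hj
    by_cases hji : j = i
    · rw [if_pos hji] at hj
      cases hj
      exact hinv.2.1
    · rw [if_neg hji] at hj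
      exact nomatch hj
  | subnet u v ihu ihv =>
    intro hinv j ξ hj
    rw [netlift_subnet] at hj
    cases hu : netlift srToy u j with
    | none =>
      rw [hu] at hj
      exact ihv hinv.2 j ξ hj
    | some ξ₀ =>
      rw [hu] at hj
      have he : ξ₀ = ξ := Option.some.inj hj
      subst he
      exact ihu hinv.1 j _ hu

lemma ips_pres : ∀ (t : NetTree ℕ) {s a s'}, (pnet TNP t).trans s a s' →
    netIps s' = netIps s := by
  intro t
  induction t with
  | node i R =>
    intro s a s' h
    cases h <;> rfl
  | par t1 t2 ih1 ih2 =>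
    intro s a s' h
    cases h with
    | cast_left h1 h2 _ _ => show _ ∪ _ = _ ∪ _; rw [ih1 h1, ih2 h2]
    | cast_right h1 h2 _ _ => show _ ∪ _ = _ ∪ _; rw [ih1 h1, ih2 h2]
    | arrive h1 h2 => show _ ∪ _ = _ ∪ _; rw [ih1 h1, ih2 h2]
    | tau_left h1 => show _ ∪ _ = _ ∪ _; rw [ih1 h1]
    | tau_right h1 => show _ ∪ _ = _ ∪ _; rw [ih2 h1]
    | deliver_left h1 => show _ ∪ _ = _ ∪ _; rw [ih1 h1]
    | deliver_right h1 => show _ ∪ _ = _ ∪ _; rw [ih2 h1]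
    | connect h1 h2 => show _ ∪ _ = _ ∪ _; rw [ih1 h1, ih2 h2]
    | disconnect h1 h2 => show _ ∪ _ = _ ∪ _; rw [ih1 h1, ih2 h2]

lemma disj_pres : ∀ (t : NetTree ℕ) {s a s'}, (pnet TNP t).trans s a s' →
    Disj s → Disj s' := by
  intro t
  induction t with
  | node i R =>
    intro s a s' h _
    cases h <;> trivial
  | par t1 t2 ih1 ih2 =>
    intro s a s' h hd
    cases h with
    | cast_left h1 h2 _ _ =>
      exact ⟨by rw [ips_pres t1 h1, ips_pres t2 h2]; exact hd.1, ih1 h1 hd.2.1, ih2 h2 hd.2.2⟩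
    | cast_right h1 h2 _ _ =>
      exact ⟨by rw [ips_pres t1 h1, ips_pres t2 h2]; exact hd.1, ih1 h1 hd.2.1, ih2 h2 hd.2.2⟩
    | arrive h1 h2 =>
      exact ⟨by rw [ips_pres t1 h1, ips_pres t2 h2]; exact hd.1, ih1 h1 hd.2.1, ih2 h2 hd.2.2⟩
    | tau_left h1 =>
      exact ⟨by rw [ips_pres t1 h1]; exact hd.1, ih1 h1 hd.2.1, hd.2.2⟩
    | tau_right h1 =>
      exact ⟨by rw [ips_pres t2 h1]; exact hd.1, hd.2.1, ih2 h1 hd.2.2⟩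
    | deliver_left h1 =>
      exact ⟨by rw [ips_pres t1 h1]; exact hd.1, ih1 h1 hd.2.1, hd.2.2⟩
    | deliver_right h1 =>
      exact ⟨by rw [ips_pres t2 h1]; exact hd.1, hd.2.1, ih2 h1 hd.2.2⟩
    | connect h1 h2 =>
      exact ⟨by rw [ips_pres t1 h1, ips_pres t2 h2]; exact hd.1, ih1 h1 hd.2.1, ih2 h2 hd.2.2⟩
    | disconnect h1 h2 =>
      exact ⟨by rw [ips_pres t1 h1, ips_pres t2 h2]; exact hd.1, ih1 h1 hd.2.1, ih2 h2 hd.2.2⟩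

lemma Rel_refl : ∀ o : Option ToyState, Rel o o := by
  intro o; cases o <;> simp [Rel]

lemma Rel_orElse {o1 o1' o2 o2' : Option ToyState} (h1 : Rel o1 o1') (h2 : Rel o2 o2') :
    Rel (o1.orElse fun _ => o2) (o1'.orElse fun _ => o2') := by
  cases o1 <;> cases o1' <;> simp [Rel] at h1 ⊢ <;> first | exact h2 | exact h1

lemma par_no_mono {σ : ℕ → ToyState} {i : ℕ} {x y : (ToyState × ToySeqp) × List ToyMsg}
    {a : SeqAction ℕ ToyMsg ℕ}
    (h : (TNP i).trans x a y) (hc : CtrlInv σ x.1.1 x.1.2) : x.1.1.no ≤ y.1.1.no := by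
  obtain ⟨⟨ξ, p⟩, q⟩ := x
  cases h with
  | left h1 _ => exact (seq_step h1 hc).2.1
  | right _ _ => exact le_refl _
  | comm h1 _ => exact (seq_step h1 hc).2.1

lemma step_rel {σ : ℕ → ToyState} : ∀ (t : NetTree ℕ) {s a s'},
    (pnet TNP t).trans s a s' → netInv σ s →
    ∀ j, Rel (netlift srToy s j) (netlift srToy s' j) := by
  intro t
  induction t with
  | node i R =>
    have key : ∀ (x y : (ToyState × ToySeqp) × List ToyMsg), x.1.1.no ≤ y.1.1.no →
        ∀ (R1 R2 : Set ℕ) (j : ℕ),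
        Rel (netlift srToy (.node i x R1) j) (netlift srToy (.node i y R2) j) := by
      intro x y hno R1 R2 j
      rw [netlift_node, netlift_node]
      by_cases hj : j = i
      · rw [if_pos hj, if_pos hj]; exact hno
      · rw [if_neg hj, if_neg hj]; trivial
    intro s a s' h hinv j
    cases h with
    | bcast h1 => exact key _ _ (par_no_mono h1 hinv.2.2.1) _ _ j
    | gcast h1 => exact key _ _ (par_no_mono h1 hinv.2.2.1) _ _ j
    | ucast hd h1 => exact key _ _ (par_no_mono h1 hinv.2.2.1) _ _ j
    | notucast hd h1 => exact key _ _ (par_no_mono h1 hinv.2.2.1) _ _ j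
    | deliver h1 => exact key _ _ (par_no_mono h1 hinv.2.2.1) _ _ j
    | tau h1 => exact key _ _ (par_no_mono h1 hinv.2.2.1) _ _ j
    | receive h1 => exact key _ _ (par_no_mono h1 hinv.2.2.1) _ _ j
    | not_arrive => exact key _ _ (le_refl _) _ _ j
    | connect_this => exact key _ _ (le_refl _) _ _ j
    | connect_that => exact key _ _ (le_refl _) _ _ j
    | connect_other h1 h2 => exact key _ _ (le_refl _) _ _ j
    | disconnect_this => exact key _ _ (le_refl _) _ _ j
    | disconnect_that => exact key _ _ (le_refl _) _ _ j
    | disconnect_other h1 h2 => exact key _ _ (le_refl _) _ _ j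
  | par t1 t2 ih1 ih2 =>
    intro s a s' h hinv j
    cases h with
    | cast_left h1 h2 _ _ =>
      exact Rel_orElse (ih1 h1 hinv.1 j) (ih2 h2 hinv.2 j)
    | cast_right h1 h2 _ _ =>
      exact Rel_orElse (ih1 h1 hinv.1 j) (ih2 h2 hinv.2 j)
    | arrive h1 h2 =>
      exact Rel_orElse (ih1 h1 hinv.1 j) (ih2 h2 hinv.2 j)
    | tau_left h1 =>
      exact Rel_orElse (ih1 h1 hinv.1 j) (Rel_refl _)
    | tau_right h1 =>
      exact Rel_orElse (Rel_refl _) (ih2 h1 hinv.2 j)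
    | deliver_left h1 =>
      exact Rel_orElse (ih1 h1 hinv.1 j) (Rel_refl _)
    | deliver_right h1 =>
      exact Rel_orElse (Rel_refl _) (ih2 h1 hinv.2 j)
    | connect h1 h2 =>
      exact Rel_orElse (ih1 h1 hinv.1 j) (ih2 h2 hinv.2 j)
    | disconnect h1 h2 =>
      exact Rel_orElse (ih1 h1 hinv.1 j) (ih2 h2 hinv.2 j)

/-- goal of the local (par) step lemma, by action -/
def ParGoal (σ' : ℕ → ToyState) (i : ℕ) (x y : (ToyState × ToySeqp) × List ToyMsg) :
    SeqAction ℕ ToyMsg ℕ → Prop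
  | .tau => nodeInv σ' i y
  | .broadcast m => nodeInv σ' i y ∧ m = .pkt x.1.1.no x.1.1.ip
  | .receive m => msgNumOk σ' m → nodeInv σ' i y
  | .groupcast _ _ => False
  | .unicast _ _ => False
  | .notunicast _ => False
  | .deliver _ => False
  | .send _ => True

lemma par_step {σ σ' : ℕ → ToyState} (hm : Mono σ σ') {i : ℕ}
    {x y : (ToyState × ToySeqp) × List ToyMsg} {a : SeqAction ℕ ToyMsg ℕ}
    (h : (TNP i).trans x a y) (hinv : nodeInv σ i x) (hag : σ' i = y.1.1) :
    ParGoal σ' i x y a := by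
  obtain ⟨⟨ξ, p⟩, q⟩ := x
  obtain ⟨hip, hI, hc, hq⟩ := hinv
  cases h with
  | @left _ s2 _ _ h1 hnr =>
    obtain ⟨ξ', p'⟩ := s2
    have S := seq_step h1 hc
    rcases S.2.2 with ⟨rfl, hc', hipost⟩ | ⟨m, rfl, rfl, rfl⟩ | ⟨rfl, rfl, hc'⟩
    · -- tau step of the process
      refine ⟨S.1.trans hip, ?_, CtrlInv_mono hm hc', fun m hm' => msgNumOk_mono hm (hq m hm')⟩
      rcases hipost with h' | h' | ⟨e1, e2⟩
      · rw [h', S.1, hip, hag]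
      · exact le_trans h' (hm _)
      · rw [e1, e2]; exact le_trans hI (hm _)
    · exact absurd trivial hnr
    · -- broadcast step
      exact ⟨⟨hip, le_trans hI (hm _), CtrlInv_mono hm hc',
        fun m hm' => msgNumOk_mono hm (hq m hm')⟩, rfl⟩
  | right h1 hns =>
    cases h1 with
    | receive q m =>
      intro hmsg
      refine ⟨hip, le_trans hI (hm _), CtrlInv_mono hm hc, ?_⟩
      intro m' hm'
      rcases List.mem_append.mp hm' with h' | h'
      · exact msgNumOk_mono hm (hq m' h')
      · rw [List.mem_singleton.mp h']; exact hmsg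
    | send m q => trivial
  | @comm _ s2 _ q2' m0 h1 h2 =>
    obtain ⟨ξ', p'⟩ := s2
    cases h2 with
    | send m q2 =>
      have S := seq_step h1 hc
      rcases S.2.2 with ⟨he, _, _⟩ | ⟨m', he, rfl, rfl⟩ | ⟨he, _, _⟩
      · exact absurd he (by intro h; exact nomatch h)
      · have hmm : m' = m0 := by
          cases he; rfl
        subst hmm
        refine ⟨hip, le_trans hI (hm _), ?_, ?_⟩
        · exact Or.inr <| Or.inl ⟨rfl, msgNumOk_mono hm (hq _ List.mem_cons_self)⟩
        · intro m'' hm''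
          exact msgNumOk_mono hm (hq m'' (List.mem_cons_of_mem _ hm''))
      · exact absurd he (by intro h; exact nomatch h)

/-- goal of the network step lemma, by action -/
def StepGoal (σ' : ℕ → ToyState) : NodeAction ℕ ToyMsg ℕ → TNS → Prop
  | .cast _ m, s' => netInv σ' s' ∧ msgNumOk σ' m
  | .arrive _ _ m, s' => msgNumOk σ' m → netInv σ' s'
  | .deliver _ _, _ => False
  | .tau, s' => netInv σ' s'
  | .connect _ _, s' => netInv σ' s'
  | .disconnect _ _, s' => netInv σ' s'

lemma main_step {σ σ' : ℕ → ToyState} (hm : Mono σ σ') :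
    ∀ (t : NetTree ℕ) {s a s'}, (pnet TNP t).trans s a s' → netInv σ s → Agree σ' s' →
      StepGoal σ' a s' := by
  intro t
  induction t with
  | node i R =>
    intro s a s' h hinv hag
    cases h with
    | @bcast x x' _ m h1 =>
      have P := par_step hm h1 hinv hag
      refine ⟨P.1, ?_⟩
      rw [P.2]
      show x.1.1.no ≤ (σ' x.1.1.ip).no
      rw [hinv.1, hag]
      exact par_no_mono h1 hinv.2.2.1
    | @gcast x x' _ D m h1 => exact (par_step hm h1 hinv hag).elim
    | @ucast x x' _ d m hd h1 => exact (par_step hm h1 hinv hag).elim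
    | @notucast x x' _ d hd h1 => exact (par_step hm h1 hinv hag).elim
    | @deliver x x' _ d h1 => exact (par_step hm h1 hinv hag).elim
    | tau h1 => exact par_step hm h1 hinv hag
    | receive h1 => exact fun hmsg => par_step hm h1 hinv hag hmsg
    | not_arrive => exact fun _ => nodeInv_mono hm hinv
    | connect_this => exact nodeInv_mono hm hinv
    | connect_that => exact nodeInv_mono hm hinv
    | connect_other h1 h2 => exact nodeInv_mono hm hinv
    | disconnect_this => exact nodeInv_mono hm hinv
    | disconnect_that => exact nodeInv_mono hm hinv
    | disconnect_other h1 h2 => exact nodeInv_mono hm hinv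
  | par t1 t2 ih1 ih2 =>
    intro s a s' h hinv hag
    cases h with
    | cast_left h1 h2 hsub hk =>
      have G1 := ih1 h1 hinv.1 hag.1
      have G2 := ih2 h2 hinv.2 hag.2
      exact ⟨⟨G1.1, G2 G1.2⟩, G1.2⟩
    | cast_right h1 h2 hsub hk =>
      have G1 := ih1 h1 hinv.1 hag.1
      have G2 := ih2 h2 hinv.2 hag.2
      exact ⟨⟨G1 G2.2, G2.1⟩, G2.2⟩
    | arrive h1 h2 =>
      exact fun hmsg => ⟨ih1 h1 hinv.1 hag.1 hmsg, ih2 h2 hinv.2 hag.2 hmsg⟩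
    | tau_left h1 => exact ⟨ih1 h1 hinv.1 hag.1, netInv_mono hm hinv.2⟩
    | tau_right h1 => exact ⟨netInv_mono hm hinv.1, ih2 h1 hinv.2 hag.2⟩
    | deliver_left h1 => exact (ih1 h1 hinv.1 hag.1).elim
    | deliver_right h1 => exact (ih2 h1 hinv.2 hag.2).elim
    | connect h1 h2 => exact ⟨ih1 h1 hinv.1 hag.1, ih2 h2 hinv.2 hag.2⟩
    | disconnect h1 h2 => exact ⟨ih1 h1 hinv.1 hag.1, ih2 h2 hinv.2 hag.2⟩

lemma init_char : ∀ (t : NetTree ℕ) {s : TNS}, s ∈ (pnet TNP t).init →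
    netIps s = netTreeIps t ∧ (∀ σ, netInv σ s) := by
  intro t
  induction t with
  | node i R =>
    intro s hs
    obtain ⟨x, hx, rfl⟩ := hs
    obtain ⟨hx1, hx2⟩ := hx
    have e1 : x.1 = (toyInit i, toySpec .PToy) := hx1
    have e2 : x.2 = [] := hx2
    refine ⟨rfl, fun σ => ?_⟩
    refine ⟨?_, ?_, ?_, ?_⟩
    · rw [e1]; rfl
    · rw [e1]; exact Nat.zero_le _
    · have : x.1.2 = tr0 := by rw [e1]; exact spec_eq ToyPN.PToy
      exact Or.inl this
    · rw [e2]; intro m hmem; exact absurd hmem List.not_mem_nil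
  | par t1 t2 ih1 ih2 =>
    intro s hs
    obtain ⟨u, v, hu, hv, rfl⟩ := hs
    refine ⟨?_, fun σ => ⟨(ih1 hu).2 σ, (ih2 hv).2 σ⟩⟩
    show _ ∪ _ = _ ∪ _
    rw [(ih1 hu).1, (ih2 hv).1]

lemma init_disj : ∀ (t : NetTree ℕ) {s : TNS}, WfNetTree t → s ∈ (pnet TNP t).init →
    Disj s := by
  intro t
  induction t with
  | node i R =>
    intro s _ hs
    obtain ⟨x, hx, rfl⟩ := hs
    trivial
  | par t1 t2 ih1 ih2 =>
    intro s hwf hs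
    obtain ⟨u, v, hu, hv, rfl⟩ := hs
    exact ⟨by rw [(init_char t1 hu).1, (init_char t2 hv).1]; exact hwf.1,
      ih1 hwf.2.1 hu, ih2 hwf.2.2 hv⟩

end ToyProofAux
/-- the network-level invariant of the toy protocol. -/
theorem toy_bigger_than_next (n : NetTree ℕ) (hwf : WfNetTree n) :
    Invariant (closed (pnet (fun i => par (ptoy i) qmsg) n)) (fun _ => True)
      (toyNetglobal (fun σ => ∀ i, (σ i).no ≤ (σ ((σ i).nhip)).no)) := by
  intro s hs
  have key : ∀ s, Reachable (closed (pnet TNP n)) (fun _ => True) s →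
      Disj s ∧ netInv (fun j => (netlift srToy s j).getD (toyInit j)) s := by
    intro s hs
    induction hs with
    | init h => exact ⟨init_disj n hwf h, (init_char n h).2 _⟩
    | @step s1 s2 a hr ht hI ih =>
      obtain ⟨hd, hinv⟩ := ih
      have run : ∀ {a'}, (pnet TNP n).trans s1 a' s2 →
          Disj s2 ∧ StepGoal (fun j => (netlift srToy s2 j).getD (toyInit j)) a' s2 := by
        intro a' h1
        have hd' := disj_pres n h1 hd
        have hrel := step_rel n h1 hinv
        have hmono : Mono (fun j => (netlift srToy s1 j).getD (toyInit j))
            (fun j => (netlift srToy s2 j).getD (toyInit j)) := by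
          intro j
          have hr' := hrel j
          cases e1 : netlift srToy s1 j with
          | none =>
            cases e2 : netlift srToy s2 j with
            | none => simp [e1, e2]
            | some ξ => rw [e1, e2] at hr'; simp [Rel] at hr'
          | some ξ =>
            cases e2 : netlift srToy s2 j with
            | none => rw [e1, e2] at hr'; simp [Rel] at hr'
            | some ξ' =>
              rw [e1, e2] at hr'
              simp only [e1, e2, Option.getD_some]
              exact hr'
        have hag' : Agree (fun j => (netlift srToy s2 j).getD (toyInit j)) s2 :=
          agree_of_lookup _ _ hd' (fun j ξ h => by simp [h])
        exact ⟨hd', main_step hmono n h1 hinv hag'⟩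
      cases ht with
      | cast h1 => exact ⟨(run h1).1, (run h1).2.1⟩
      | tau h1 => exact ⟨(run h1).1, (run h1).2⟩
      | deliver h1 => exact ((run h1).2).elim
      | connect h1 => exact ⟨(run h1).1, (run h1).2⟩
      | disconnect h1 => exact ⟨(run h1).1, (run h1).2⟩
  obtain ⟨hd, hinv⟩ := key s hs
  intro i
  cases e : netlift srToy s i with
  | none =>
    have h0 : (fun j => (netlift srToy s j).getD (toyInit j)) i = toyInit i := by simp [e]
    rw [h0]
    exact Nat.zero_le _
  | some ξ =>
    have h0 : (fun j => (netlift srToy s j).getD (toyInit j)) i = ξ := by simp [e]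
    rw [h0]
    exact inv_extract s hinv i ξ e

end AWN
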